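/- In a group containing elements z and t_i (i ∈ ℤ) satisfying t_i t_{i-1} = t_j t_{j-1} for all i, j ∈ ℤ, the condition 'z t_i = t_{i-e} z for all i ∈ ℤ' is equivalent to the conjunction of 'z t_1 t_0 = t_1 t_0 z' and 'z ⟨t_1 t_0⟩^e = t_0 z ⟨t_1 t_0⟩^{e-1}', where ⟨t_1 t_0⟩^k denotes the alternating product t_1 t_0 t_1 t_0 ⋯ with k factors. -/

import Mathlib

private lemma conj_inv' {G : Type*} [Group G] {z a b : G} (h : z * a = b * z) :
    z * a⁻¹ = b⁻¹ * z := by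
  have hb : b = z * a * z⁻¹ := by rw [h]; group
  rw [hb]; group

/-- In a group with elements `z` and `t i` (`i ∈ ℤ`) satisfying (Q1), the condition
`z * t i = t (i - e) * z` for all `i` is equivalent to the conjunction of (R1) and (R2),
where `f k` denotes the alternating product `⟨t 1 * t 0⟩^k` with `k` factors. -/
theorem stmt2 {G : Type*} [Group G] (e : ℕ) (he : 1 ≤ e) (z : G) (t : ℤ → G)
    (hQ1 : ∀ i j : ℤ, t i * t (i - 1) = t j * t (j - 1))
    (f : ℕ → G) (hf0 : f 0 = 1)
    (hfsucc : ∀ k : ℕ, f (k + 1) = f k * (if k % 2 = 0 then t 1 else t 0)) :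
    (∀ i : ℤ, z * t i = t (i - (e : ℤ)) * z) ↔
      (z * (t 1 * t 0) = (t 1 * t 0) * z ∧ z * f e = t 0 * z * f (e - 1)) := by
  set c := t 1 * t 0 with hc_def
  have hc : ∀ i : ℤ, t i * t (i - 1) = c := by
    intro i; simpa using hQ1 i 1
  have hup : ∀ i : ℤ, t (i + 1) = c * (t i)⁻¹ := by
    intro i
    have h := hc (i + 1)
    rw [add_sub_cancel_right] at h
    rw [← h]; group
  have hdown : ∀ i : ℤ, t (i - 1) = (t i)⁻¹ * c := by
    intro i
    have h := hc i
    rw [← h]; group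
  have ht0 : t 0 = (t 1)⁻¹ * c := by
    simpa using hdown 1
  have h2 : ∀ i : ℤ, t (i - 2) = c⁻¹ * t i * c := by
    intro i
    have ha := hdown i
    have hb := hdown (i - 1)
    rw [show i - 1 - 1 = i - 2 by ring] at hb
    rw [hb, ha]; group
  have htodd : ∀ m : ℕ, t (1 - 2 * (m : ℤ)) = (c⁻¹) ^ m * t 1 * c ^ m := by
    intro m
    induction m with
    | zero => simp
    | succ n ih =>
      have key := h2 (1 - 2 * (n : ℤ))
      rw [show (1 : ℤ) - 2 * (n : ℤ) - 2 = 1 - 2 * ((n + 1 : ℕ) : ℤ) by push_cast; ring] at key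
      rw [key, ih, pow_succ, pow_succ]; group
  have hfev : ∀ m : ℕ, f (2 * m) = c ^ m ∧ f (2 * m + 1) = c ^ m * t 1 := by
    intro m
    induction m with
    | zero =>
      refine ⟨by simpa using hf0, ?_⟩
      have := hfsucc 0
      simp [hf0] at this
      simpa using this
    | succ n ih =>
      have hodd : (2 * n + 1) % 2 = 1 := by omega
      have heq : f (2 * n + 1 + 1) = f (2 * n + 1) * t 0 := by
        rw [hfsucc (2 * n + 1), hodd]; simp
      have hfe : f (2 * (n + 1)) = c ^ (n + 1) := by
        rw [show 2 * (n + 1) = 2 * n + 1 + 1 by ring, heq, ih.2, pow_succ, hc_def]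
        group
      refine ⟨hfe, ?_⟩
      have heven : (2 * (n + 1)) % 2 = 0 := by omega
      rw [hfsucc (2 * (n + 1)), heven, hfe]; simp
  have hcz : ∀ k : ℕ, z * c = c * z → z * c ^ k = c ^ k * z := by
    intro k hzc
    exact (Commute.pow_right (hzc : Commute z c) k)
  have keylem : z * c = c * z →
      ((z * t 1 = t (1 - (e : ℤ)) * z) ↔ (z * f e = t 0 * z * f (e - 1))) := by
    intro hzc
    have hzck : ∀ k : ℕ, z * c ^ k = c ^ k * z := fun k => hcz k hzc
    rcases Nat.even_or_odd e with ⟨m, hm⟩ | ⟨m, hm⟩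
    · -- e = m + m, m ≥ 1
      obtain ⟨k, rfl⟩ : ∃ k, m = k + 1 := ⟨m - 1, by omega⟩
      subst hm
      have he1 : (k + 1) + (k + 1) = 2 * (k + 1) := by ring
      have he2 : 2 * (k + 1) - 1 = 2 * k + 1 := by omega
      rw [he1, he2, (hfev (k + 1)).1, (hfev k).2]
      have hcast : (1 : ℤ) - ((2 * (k + 1) : ℕ) : ℤ) = 1 - 2 * ((k + 1 : ℕ) : ℤ) := by
        push_cast; ring
      rw [hcast, htodd (k + 1)]
      have lhs_eq : z * c ^ (k + 1) = c ^ (k + 1) * z := hzck _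
      have rhs_eq : t 0 * z * (c ^ k * t 1) = (t 0 * c ^ k) * (z * t 1) := by
        rw [show t 0 * z * (c ^ k * t 1) = t 0 * (z * c ^ k) * t 1 by group, hzck k]
        group
      have id1 : c ^ (k + 1) * z = (t 0 * c ^ k) * (((c⁻¹) ^ (k + 1) * t 1 * c ^ (k + 1)) * z) := by
        rw [ht0]; group
      rw [lhs_eq, rhs_eq, id1, mul_right_inj]
      exact eq_comm
    · -- e = 2 * m + 1
      subst hm
      have he2 : 2 * m + 1 - 1 = 2 * m := by omega
      rw [he2, (hfev m).1, (hfev m).2]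
      have hcast : (1 : ℤ) - ((2 * m + 1 : ℕ) : ℤ) = (1 - 2 * ((m : ℕ) : ℤ)) - 1 := by
        push_cast; ring
      rw [hcast, hdown, htodd m]
      have lhs_eq : z * (c ^ m * t 1) = c ^ m * (z * t 1) := by
        rw [show z * (c ^ m * t 1) = (z * c ^ m) * t 1 by group, hzck m]; group
      have rhs_eq : t 0 * z * c ^ m = t 0 * (c ^ m * z) := by
        rw [show t 0 * z * c ^ m = t 0 * (z * c ^ m) by group, hzck m]
      have id1 : t 0 * (c ^ m * z) = c ^ m * ((((c⁻¹) ^ m * t 1 * c ^ m)⁻¹ * c) * z) := by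
        rw [ht0]; group
      rw [lhs_eq, rhs_eq, id1, mul_right_inj]
  constructor
  · intro H
    have hzc : z * c = c * z := by
      have e1 : t (1 - (e : ℤ)) * t (0 - (e : ℤ)) = c := by
        have h := hc (1 - (e : ℤ))
        rw [show (1 : ℤ) - (e : ℤ) - 1 = 0 - (e : ℤ) by ring] at h
        exact h
      calc z * c = z * t 1 * t 0 := by rw [hc_def]; group
        _ = t (1 - (e : ℤ)) * z * t 0 := by rw [H 1]
        _ = t (1 - (e : ℤ)) * (t (0 - (e : ℤ)) * z) := by rw [mul_assoc, H 0]
        _ = c * z := by rw [← e1]; group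
    exact ⟨hzc, (keylem hzc).mp (H 1)⟩
  · rintro ⟨hzc, hzf⟩
    have h1 : z * t 1 = t (1 - (e : ℤ)) * z := (keylem hzc).mpr hzf
    have step_up : ∀ i : ℤ, z * t i = t (i - (e : ℤ)) * z →
        z * t (i + 1) = t (i + 1 - (e : ℤ)) * z := by
      intro i hi
      have hinv : z * (t i)⁻¹ = (t (i - (e : ℤ)))⁻¹ * z := conj_inv' hi
      rw [hup i, show i + 1 - (e : ℤ) = (i - (e : ℤ)) + 1 by ring, hup (i - (e : ℤ))]
      calc z * (c * (t i)⁻¹) = (z * c) * (t i)⁻¹ := by group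
        _ = (c * z) * (t i)⁻¹ := by rw [hzc]
        _ = c * (z * (t i)⁻¹) := by group
        _ = c * ((t (i - (e : ℤ)))⁻¹ * z) := by rw [hinv]
        _ = (c * (t (i - (e : ℤ)))⁻¹) * z := by group
    have step_down : ∀ i : ℤ, z * t i = t (i - (e : ℤ)) * z →
        z * t (i - 1) = t (i - 1 - (e : ℤ)) * z := by
      intro i hi
      have hinv : z * (t i)⁻¹ = (t (i - (e : ℤ)))⁻¹ * z := conj_inv' hi
      rw [hdown i, show i - 1 - (e : ℤ) = (i - (e : ℤ)) - 1 by ring, hdown (i - (e : ℤ))]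
      calc z * ((t i)⁻¹ * c) = (z * (t i)⁻¹) * c := by group
        _ = ((t (i - (e : ℤ)))⁻¹ * z) * c := by rw [hinv]
        _ = (t (i - (e : ℤ)))⁻¹ * (z * c) := by group
        _ = (t (i - (e : ℤ)))⁻¹ * (c * z) := by rw [hzc]
        _ = ((t (i - (e : ℤ)))⁻¹ * c) * z := by group
    have h0 : z * t 0 = t (0 - (e : ℤ)) * z := by
      have h := step_down 1 h1
      rw [show (1 : ℤ) - 1 = 0 by ring] at h
      exact h
    intro i
    induction i using Int.induction_on with
    | zero => exact h0
    | succ n ih =>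
      have h := step_up n ih
      rw [show ((n : ℤ) + 1) = ((n + 1 : ℕ) : ℤ) by push_cast; ring] at h
      exact h
    | pred n ih =>
      exact step_down (-(n : ℤ)) ih
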